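/- Let $r,\beta>0$, $\theta\in\mathbb{R}$, $T>0$, $q>0$, $\gamma>0$ with $\gamma\ne1$, $\alpha\in(0,1)$, $\gamma_1:=1-\alpha(1-\gamma)$, $0<L_0<L_1$, $\varepsilon_0>\varepsilon_1\ge0$, and let $\psi_0:[0,T]\to\mathbb{R}$ be continuously differentiable with $|\psi_0(\tau)|\le q$ and $|\psi_0'(\tau)|\le q$ for all $\tau\in[0,T]$. For $\varepsilon>0$ define $\overline{z}(\tau,x):=-\psi_0(\tau)\big(\tfrac{\tau}{\varepsilon}\mathbf{1}_{\{\tau\le\varepsilon\}}+\mathbf{1}_{\{\tau>\varepsilon\}}\big)+\varepsilon^3\big(x+\tfrac{2}{\varepsilon^2}\big)^2\mathbf{1}_{\{x\ge-2/\varepsilon^2\}}$. Then there exists $\varepsilon^*>0$ such that for every $\varepsilon\in(0,\varepsilon^*)$ and every $(\tau,x)$ with $0<\tau<T$, $x<-1/\varepsilon^2$, $\tau\ne\varepsilon$ and $x\ne-2/\varepsilon^2$, one has $\partial_\tau\overline{z}(\tau,x)-\tfrac{\theta^2}{2}\partial_{xx}\overline{z}(\tau,x)-\big(\beta-r+\tfrac{\theta^2}{2}\big)\partial_x\overline{z}(\tau,x)+r\,\overline{z}(\tau,x)\;\ge\;U(x)$.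 -/

import Mathlib

open Real Set

/-- The barrier `z̄(τ,x) = -ψ0(τ)(τ/ε · 1_{τ≤ε} + 1_{τ>ε}) + ε³(x+2/ε²)² 1_{x≥-2/ε²}`. -/
noncomputable def zbar (ψ0 : ℝ → ℝ) (ε τ x : ℝ) : ℝ :=
  -ψ0 τ * ((τ / ε) * (if τ ≤ ε then (1:ℝ) else 0) + (if ε < τ then (1:ℝ) else 0))
    + ε ^ 3 * (x + 2 / ε ^ 2) ^ 2 * (if -2 / ε ^ 2 ≤ x then (1:ℝ) else 0)

set_option maxHeartbeats 4000000 in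
/-- For all small `ε > 0`, `z̄` is a supersolution
`∂_τ z̄ - (θ²/2) ∂_{xx} z̄ - (β-r+θ²/2) ∂_x z̄ + r z̄ ≥ U(x)`
on `(0,T)×(-∞,-1/ε²)` away from the kink loci `τ = ε` and `x = -2/ε²`. -/
theorem stmt9 (r β θ T q γ α γ1 L0 L1 ε0 ε1 : ℝ) (ψ0 ψ0' : ℝ → ℝ)
    (hr : 0 < r) (hβ : 0 < β) (hT : 0 < T) (hq : 0 < q)
    (hγ : 0 < γ) (hγne : γ ≠ 1) (hα : α ∈ Ioo (0:ℝ) 1)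
    (hγ1 : γ1 = 1 - α * (1 - γ)) (hL0 : 0 < L0) (hL : L0 < L1)
    (hε1 : 0 ≤ ε1) (hε : ε1 < ε0)
    (hψ0deriv : ∀ τ ∈ Icc (0:ℝ) T, HasDerivAt ψ0 (ψ0' τ) τ)
    (hψ0cont : ContinuousOn ψ0' (Icc 0 T))
    (hψ0bd : ∀ τ ∈ Icc (0:ℝ) T, |ψ0 τ| ≤ q)
    (hψ0'bd : ∀ τ ∈ Icc (0:ℝ) T, |ψ0' τ| ≤ q) :
    ∃ εstar > (0:ℝ), ∀ ε ∈ Ioo (0:ℝ) εstar, ∀ τ x : ℝ,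
      0 < τ → τ < T → x < -1 / ε ^ 2 → τ ≠ ε → x ≠ -2 / ε ^ 2 →
      deriv (fun t => zbar ψ0 ε t x) τ
        - θ ^ 2 / 2 * deriv (deriv (fun z => zbar ψ0 ε τ z)) x
        - (β - r + θ ^ 2 / 2) * deriv (fun z => zbar ψ0 ε τ z) x
        + r * zbar ψ0 ε τ x
      ≥ (ε0 - ε1) -
          (γ1 / (1 - γ1) * (L1 ^ ((γ1 - γ) / γ1) - L0 ^ ((γ1 - γ) / γ1)))
            * Real.exp (-x / γ1) := by
  obtain ⟨hα0, hα1⟩ := hα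
  have hγ1pos : 0 < γ1 := by
    rcases lt_or_gt_of_ne hγne with h | h <;> nlinarith
  set A : ℝ := γ1 / (1 - γ1) * (L1 ^ ((γ1 - γ) / γ1) - L0 ^ ((γ1 - γ) / γ1)) with hA
  have hApos : 0 < A := by
    have hnum : γ1 - γ = (1 - γ) * (1 - α) := by rw [hγ1]; ring
    have hden : 1 - γ1 = α * (1 - γ) := by rw [hγ1]; ring
    rcases lt_or_gt_of_ne hγne with h | h
    · have he : 0 < (γ1 - γ) / γ1 := by
        apply div_pos _ hγ1pos; rw [hnum]; nlinarith
      have hLL : L0 ^ ((γ1 - γ) / γ1) < L1 ^ ((γ1 - γ) / γ1) :=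
        Real.rpow_lt_rpow hL0.le hL he
      have : 0 < γ1 / (1 - γ1) := by
        apply div_pos hγ1pos; rw [hden]; nlinarith
      exact mul_pos this (by linarith)
    · have he : (γ1 - γ) / γ1 < 0 := by
        apply div_neg_of_neg_of_pos _ hγ1pos; rw [hnum]; nlinarith
      have hLL : L1 ^ ((γ1 - γ) / γ1) < L0 ^ ((γ1 - γ) / γ1) :=
        Real.rpow_lt_rpow_of_neg hL0 hL he
      have : γ1 / (1 - γ1) < 0 := by
        apply div_neg_of_pos_of_neg hγ1pos; rw [hden]; nlinarith
      exact mul_pos_of_neg_of_neg this (by linarith)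
  set B : ℝ := β - r + θ ^ 2 / 2 with hB
  set C : ℝ := (ε0 - ε1) + q + r * q + θ ^ 2 + 2 * |B| with hC
  have hCpos : 0 < C := by
    have h1 : 0 < ε0 - ε1 := by linarith
    have h2 : 0 ≤ |B| := abs_nonneg B
    have h3 : 0 ≤ θ ^ 2 := sq_nonneg θ
    have h4 : 0 < r * q := mul_pos hr hq
    rw [hC]; linarith
  refine ⟨min 1 (A / (γ1 * (C + q))), lt_min one_pos (div_pos hApos (mul_pos hγ1pos (by linarith))), ?_⟩
  rintro ε ⟨hε0, hεs⟩ τ x hτ0 hτT hx hτne hxne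
  have hε1' : ε < 1 := lt_of_lt_of_le hεs (min_le_left _ _)
  have hεA : ε < A / (γ1 * (C + q)) := lt_of_lt_of_le hεs (min_le_right _ _)
  have hε2 : (0:ℝ) < ε ^ 2 := by positivity
  have hεne : ε ≠ 0 := hε0.ne'
  have hτmem : τ ∈ Icc (0:ℝ) T := ⟨hτ0.le, hτT.le⟩
  -- RHS bound
  set E : ℝ := Real.exp (-x / γ1) with hE
  have hRHS : (ε0 - ε1) - A * E ≤ -(q + r * q + θ ^ 2 + 2 * |B|) - q / ε := by
    have hxE : 1 / (γ1 * ε ^ 2) ≤ E := by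
      have h1 : 1 / ε ^ 2 ≤ -x := by
        have : -1 / ε ^ 2 = -(1 / ε ^ 2) := by ring
        linarith [hx, this ▸ hx]
      have h2 : 1 / ε ^ 2 / γ1 ≤ -x / γ1 := by gcongr
      have h3 : -x / γ1 ≤ E := by
        have := Real.add_one_le_exp (-x / γ1)
        rw [hE]; linarith
      have h4 : 1 / (γ1 * ε ^ 2) = 1 / ε ^ 2 / γ1 := by
        field_simp
      linarith
    have hkey : C + q / ε ≤ A * E := by
      have h2 : ε * (γ1 * (C + q)) < A := (lt_div_iff₀ (mul_pos hγ1pos (by linarith))).mp hεA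
      have h5 : A / (γ1 * ε ^ 2) ≤ A * E := by
        have := mul_le_mul_of_nonneg_left hxE hApos.le
        calc A / (γ1 * ε ^ 2) = A * (1 / (γ1 * ε ^ 2)) := by ring
        _ ≤ A * E := this
      have h6 : C + q / ε ≤ A / (γ1 * ε ^ 2) := by
        rw [le_div_iff₀ (by positivity)]
        have heq : (C + q / ε) * (γ1 * ε ^ 2) = γ1 * ((C * ε + q) * ε) := by
          field_simp
        rw [heq]
        have h7 : 0 ≤ γ1 * ε * C * (1 - ε) :=
          mul_nonneg (mul_nonneg (mul_nonneg hγ1pos.le hε0.le) hCpos.le) (by linarith)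
        nlinarith
      linarith
    rw [hC] at hkey; linarith
  -- time derivative bound
  have hqε : 0 < q / ε := by positivity
  have hDτ : -(q + q / ε) ≤ deriv (fun t => zbar ψ0 ε t x) τ := by
    set Kx : ℝ := ε ^ 3 * (x + 2 / ε ^ 2) ^ 2 * (if -2 / ε ^ 2 ≤ x then (1:ℝ) else 0) with hKx
    have b1 := abs_le.mp (hψ0'bd τ hτmem)
    have b2 := abs_le.mp (hψ0bd τ hτmem)
    rcases lt_or_gt_of_ne hτne with hlt | hgt
    · have hev : (fun t => zbar ψ0 ε t x) =ᶠ[nhds τ] (fun t => -ψ0 t * (t / ε) + Kx) := by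
        filter_upwards [Iio_mem_nhds hlt] with t ht
        simp only [mem_Iio] at ht
        simp only [zbar, if_pos (le_of_lt ht), if_neg (not_lt.2 (le_of_lt ht)), mul_one,
          add_zero, hKx]
      have hd : HasDerivAt (fun t => -ψ0 t * (t / ε) + Kx)
          (-ψ0' τ * (τ / ε) + -ψ0 τ * (1 / ε)) τ := by
        have h1 : HasDerivAt (fun t : ℝ => t / ε) (1 / ε) τ := by
          simpa using (hasDerivAt_id τ).div_const ε
        exact (((hψ0deriv τ hτmem).neg).mul h1).add_const Kx
      rw [(hd.congr_of_eventuallyEq hev).deriv]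
      have hτε : τ / ε ≤ 1 := (div_le_one hε0).2 hlt.le
      have hτε0 : 0 ≤ τ / ε := by positivity
      have hεinv : 0 ≤ 1 / ε := by positivity
      have e1 : q / ε = q * (1 / ε) := by ring
      nlinarith [mul_le_mul_of_nonneg_right b1.2 hτε0,
        mul_le_mul_of_nonneg_right b2.2 hεinv,
        mul_le_mul_of_nonneg_left hτε hq.le, e1]
    · have hev : (fun t => zbar ψ0 ε t x) =ᶠ[nhds τ] (fun t => -ψ0 t + Kx) := by
        filter_upwards [Ioi_mem_nhds hgt] with t ht
        simp only [mem_Ioi] at ht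
        simp only [zbar, if_neg (not_le.2 ht), if_pos ht, mul_zero, zero_add, mul_one, hKx]
      have hd : HasDerivAt (fun t => -ψ0 t + Kx) (-ψ0' τ) τ :=
        ((hψ0deriv τ hτmem).neg).add_const Kx
      rw [(hd.congr_of_eventuallyEq hev).deriv]
      linarith
  -- bound on the time part P
  set P : ℝ := -ψ0 τ * ((τ / ε) * (if τ ≤ ε then (1:ℝ) else 0) + (if ε < τ then (1:ℝ) else 0)) with hP
  have hPbd : -q ≤ P := by
    have b2 := abs_le.mp (hψ0bd τ hτmem)
    rcases le_or_gt τ ε with h | h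
    · rw [hP, if_pos h, if_neg (not_lt.2 h)]
      have hτε : τ / ε ≤ 1 := (div_le_one hε0).2 h
      have hτε0 : 0 ≤ τ / ε := by positivity
      nlinarith [mul_le_mul_of_nonneg_right b2.2 hτε0, mul_le_mul_of_nonneg_left hτε hq.le]
    · rw [hP, if_neg (not_le.2 h), if_pos h]
      nlinarith
  have habsB : 0 ≤ |B| := abs_nonneg B
  have hθ2 : 0 ≤ θ ^ 2 := sq_nonneg θ
  -- spatial case split
  rcases lt_or_gt_of_ne hxne with hxlt | hxgt
  · -- x < -2/ε² : spatial part vanishes locally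
    have hder0 : ∀ y < -2 / ε ^ 2, deriv (fun z => zbar ψ0 ε τ z) y = 0 := by
      intro y hy
      have hev : (fun z => zbar ψ0 ε τ z) =ᶠ[nhds y] (fun _ => P) := by
        filter_upwards [Iio_mem_nhds hy] with z hz
        simp only [mem_Iio] at hz
        rw [zbar, if_neg (not_le.2 hz), mul_zero, add_zero, hP]
      rw [hev.deriv_eq, deriv_const]
    have d1 : deriv (fun z => zbar ψ0 ε τ z) x = 0 := hder0 x hxlt
    have d2 : deriv (deriv (fun z => zbar ψ0 ε τ z)) x = 0 := by
      have hev2 : deriv (fun z => zbar ψ0 ε τ z) =ᶠ[nhds x] (fun _ => (0:ℝ)) := by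
        filter_upwards [Iio_mem_nhds hxlt] with y hy
        exact hder0 y hy
      rw [hev2.deriv_eq, deriv_const]
    have hzval : zbar ψ0 ε τ x = P := by
      rw [zbar, if_neg (not_le.2 hxlt), mul_zero, add_zero, hP]
    rw [d1, d2, hzval]
    have hrP : -(r * q) ≤ r * P := by nlinarith
    clear_value A B C E P
    linarith
  · -- x > -2/ε²
    have hder1 : ∀ y ∈ Ioi (-2 / ε ^ 2), deriv (fun z => zbar ψ0 ε τ z) y
        = ε ^ 3 * (2 * (y + 2 / ε ^ 2)) := by
      intro y hy
      have hev : (fun z => zbar ψ0 ε τ z) =ᶠ[nhds y]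
          (fun z => P + ε ^ 3 * (z + 2 / ε ^ 2) ^ 2) := by
        filter_upwards [Ioi_mem_nhds hy] with z hz
        simp only [mem_Ioi] at hz
        rw [zbar, if_pos (le_of_lt hz), mul_one, hP]
      rw [hev.deriv_eq]
      have h1 : HasDerivAt (fun z : ℝ => (z + 2 / ε ^ 2) ^ 2) (2 * (y + 2 / ε ^ 2)) y := by
        simpa using ((hasDerivAt_id y).add_const (2 / ε ^ 2)).fun_pow 2
      exact ((h1.const_mul (ε ^ 3)).const_add P).deriv
    have d1 : deriv (fun z => zbar ψ0 ε τ z) x = ε ^ 3 * (2 * (x + 2 / ε ^ 2)) :=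
      hder1 x hxgt
    have d2 : deriv (deriv (fun z => zbar ψ0 ε τ z)) x = ε ^ 3 * 2 := by
      have hev2 : deriv (fun z => zbar ψ0 ε τ z) =ᶠ[nhds x]
          (fun y => ε ^ 3 * (2 * (y + 2 / ε ^ 2))) := by
        filter_upwards [Ioi_mem_nhds hxgt] with y hy
        exact hder1 y hy
      rw [hev2.deriv_eq]
      have h1 : HasDerivAt (fun y : ℝ => ε ^ 3 * (2 * (y + 2 / ε ^ 2))) (ε ^ 3 * 2) x := by
        have := (((hasDerivAt_id x).add_const (2 / ε ^ 2)).const_mul (2:ℝ)).const_mul (ε ^ 3)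
        simpa using this
      exact h1.deriv
    have hzval : zbar ψ0 ε τ x = P + ε ^ 3 * (x + 2 / ε ^ 2) ^ 2 := by
      rw [zbar, if_pos (le_of_lt hxgt), mul_one, hP]
    rw [d1, d2, hzval]
    set u : ℝ := x + 2 / ε ^ 2 with hu
    have hu0 : 0 < u := by
      have h' : -2 / ε ^ 2 = -(2 / ε ^ 2) := by ring
      rw [hu]; rw [h'] at hxgt; linarith
    have hu1 : u < 1 / ε ^ 2 := by
      have h1 : -1 / ε ^ 2 + 2 / ε ^ 2 = 1 / ε ^ 2 := by ring
      rw [hu]; linarith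
    have hε3 : ε ^ 3 ≤ 1 := by nlinarith
    -- bound -B * (ε³ * 2u) ≥ -2|B|
    have hBu : B * (ε ^ 3 * (2 * u)) ≤ 2 * |B| := by
      have h1 : ε ^ 3 * (2 * u) ≤ 2 * ε := by
        have : u * ε ^ 2 ≤ 1 := by
          have := mul_le_mul_of_nonneg_right hu1.le hε2.le
          calc u * ε ^ 2 ≤ 1 / ε ^ 2 * ε ^ 2 := this
          _ = 1 := by field_simp
        nlinarith [mul_le_mul_of_nonneg_left this (by positivity : (0:ℝ) ≤ 2 * ε)]
      have h2 : 0 ≤ ε ^ 3 * (2 * u) := by positivity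
      calc B * (ε ^ 3 * (2 * u)) ≤ |B| * (ε ^ 3 * (2 * u)) :=
            mul_le_mul_of_nonneg_right (le_abs_self B) h2
      _ ≤ |B| * (2 * ε) := mul_le_mul_of_nonneg_left h1 habsB
      _ ≤ 2 * |B| := by nlinarith
    have hθε : θ ^ 2 / 2 * (ε ^ 3 * 2) ≤ θ ^ 2 := by nlinarith
    have hrP : -(r * q) ≤ r * P := by nlinarith
    have hrS : 0 ≤ r * (ε ^ 3 * u ^ 2) := by positivity
    have expand : r * (P + ε ^ 3 * u ^ 2) = r * P + r * (ε ^ 3 * u ^ 2) := by ring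
    clear_value A B C E P u
    linarith [hDτ, hRHS, hBu, hθε, hrP, hrS, expand]
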